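/- (Second scenario) Let γ ∈ ℝ, γ ≠ 0, and set Γ12 = −γ, Γ21 = −γ, Γ11 = −(14/5)γ, Γ22 = (29/10)γ, α = −6γ. Then the coexistence equilibrium of the system df₁/dt = −α f₁ f₂ + Γ11 f₁(1−f₁) + Γ12 f₂(1−f₂), df₂/dt = α f₁ f₂ + Γ21 f₁(1−f₁) + Γ22 f₂(1−f₂) is E₁ = (2/17, 12/17); the Jacobian J at E₁ has trace (33/170)γ, and (trace J)² − 4 det J < 0, so the eigenvalues of J form a non-real complex-conjugate pair whose common real part has the sign of γ. In particular, if γ < 0 both eigenvalues have negative real part (E₁ is a stable spiral sink), while if γ > 0 both have positive real part (E₁ is unstable). -/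
import Mathlib


/-- **Second scenario.** With `Γ₁² = −γ`, `Γ₂¹ = −γ`, `Γ₁¹ = −(14/5)γ`,
`Γ₂² = (29/10)γ`, `α = −6γ` (`γ ≠ 0`), the coexistence equilibrium is
`E₁ = (2/17, 12/17)`; the Jacobian `J` at `E₁` has trace `(33/170)γ` and negative
discriminant `(tr J)² − 4 det J < 0`, so its eigenvalues are a non-real
complex-conjugate pair whose common real part has the sign of `γ`: for `γ < 0` both
eigenvalues have negative real part (stable spiral sink), for `γ > 0` positive real
part (unstable). -/
theorem second_scenario_spiral (γ : ℝ) (hγ : γ ≠ 0) :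
    let Γ12 : ℝ := -γ
    let Γ21 : ℝ := -γ
    let Γ11 : ℝ := -(14 / 5) * γ
    let Γ22 : ℝ := (29 / 10) * γ
    let α : ℝ := -6 * γ
    let f₁ : ℝ := 2 / 17
    let f₂ : ℝ := 12 / 17
    let J : Matrix (Fin 2) (Fin 2) ℝ :=
      !![-α * f₂ + (1 - 2 * f₁) * Γ11, -α * f₁ + (1 - 2 * f₂) * Γ12;
          α * f₂ + (1 - 2 * f₁) * Γ21,  α * f₁ + (1 - 2 * f₂) * Γ22]
    (-α * f₁ * f₂ + Γ11 * f₁ * (1 - f₁) + Γ12 * f₂ * (1 - f₂) = 0 ∧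
      α * f₁ * f₂ + Γ21 * f₁ * (1 - f₁) + Γ22 * f₂ * (1 - f₂) = 0) ∧
    Matrix.trace J = (33 / 170) * γ ∧
    (Matrix.trace J) ^ 2 - 4 * J.det < 0 ∧
    ∀ μ : ℂ, μ ^ 2 - (Matrix.trace J : ℝ) * μ + (J.det : ℝ) = 0 →
      μ.im ≠ 0 ∧ (μ.re < 0 ↔ γ < 0) ∧ (0 < μ.re ↔ 0 < γ) := by
  intro Γ12 Γ21 Γ11 Γ22 α f₁ f₂ J
  have hγ2 : 0 < γ ^ 2 := by positivity
  have htr : Matrix.trace J = (33 / 170) * γ := by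
    simp only [J, Matrix.trace_fin_two_of, α, Γ11, Γ22, f₁, f₂]
    ring
  have hdet : J.det = (684 / 425) * γ ^ 2 := by
    simp only [J, Matrix.det_fin_two_of, α, Γ11, Γ12, Γ21, Γ22, f₁, f₂]
    ring
  refine ⟨⟨by simp only [α, Γ11, Γ12, f₁, f₂]; ring,
           by simp only [α, Γ21, Γ22, f₁, f₂]; ring⟩, htr, ?_, ?_⟩
  · rw [htr, hdet]; nlinarith [hγ2]
  · intro μ hμ
    rw [htr, hdet] at hμ
    have hre := congrArg Complex.re hμ
    have him := congrArg Complex.im hμ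
    simp [pow_two, Complex.add_re, Complex.add_im, Complex.mul_re, Complex.mul_im] at hre him
    set x := μ.re
    set y := μ.im
    have him' : y * (2 * x - 33 / 170 * γ) = 0 := by linarith
    have hy : y ≠ 0 := by
      intro h
      rw [h] at hre
      nlinarith [sq_nonneg (x - 33 / 340 * γ), hγ2, hre]
    have hx : x = 33 / 340 * γ := by
      rcases mul_eq_zero.mp him' with h | h
      · exact absurd h hy
      · linarith
    refine ⟨hy, ?_, ?_⟩ <;> rw [hx] <;> constructor <;> intro h <;> nlinarith
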